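/- Let E and E' be real Hilbert spaces, X ⊆ E and Y ⊆ E' nonempty closed convex sets each of diameter at most D, and F : E × E' → ℝ a differentiable function that is convex-concave on X × Y, with saddle operator G(x,y) = (∇_x F(x,y), −∇_y F(x,y)). Assume G is monotone on X × Y and ‖G(z)‖ ≤ L for all z ∈ X × Y. Let T ≥ 1, let ℓ > 0, set α = 1/(ℓ√T), fix z₀ ∈ X × Y, and define the gradient descent ascent iterates z_{t+1} = Π_{X×Y}(z_t − α·G(z_t)) for t = 0, …, T−1. Let (x̄_T, ȳ_T) = (1/T)·Σ_{t=0}^{T−1} z_t. Then F(x̄_T, y) − F(x, ȳ_T) ≤ (ℓD² + L²/(2ℓ))/√T for every (x, y) ∈ X × Y. -/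

import Mathlib

open RealInnerProductSpace

noncomputable section

variable {E E' : Type*} [NormedAddCommGroup E] [InnerProductSpace ℝ E] [CompleteSpace E]
  [NormedAddCommGroup E'] [InnerProductSpace ℝ E'] [CompleteSpace E']

/-- The saddle operator `G(x,y) = (∇ₓ F(x,y), −∇_y F(x,y))` on the Hilbert product
`WithLp 2 (E × E')`. -/
def saddleOp (F : E × E' → ℝ) (z : WithLp 2 (E × E')) : WithLp 2 (E × E') :=
  (WithLp.equiv 2 (E × E')).symm
    (gradient (fun u => F (u, (WithLp.equiv 2 (E × E') z).2)) (WithLp.equiv 2 (E × E') z).1,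
     -gradient (fun v => F ((WithLp.equiv 2 (E × E') z).1, v)) (WithLp.equiv 2 (E × E') z).2)

/-- `X × Y` as a subset of the Hilbert product. -/
def prodSet (X : Set E) (Y : Set E') : Set (WithLp 2 (E × E')) :=
  (WithLp.equiv 2 (E × E')) ⁻¹' (X ×ˢ Y)

/-- `p` is the metric projection of `v` onto `S`. -/
def IsProjOn {H : Type*} [NormedAddCommGroup H] (S : Set H) (v p : H) : Prop :=
  p ∈ S ∧ ∀ w ∈ S, ‖v - p‖ ≤ ‖v - w‖

/-- Gradient inequality for a differentiable convex function. -/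
lemma grad_ineq' {H : Type*} [NormedAddCommGroup H] [InnerProductSpace ℝ H] [CompleteSpace H]
    {s : Set H} {f : H → ℝ} (hf : Differentiable ℝ f) (hc : ConvexOn ℝ s f)
    {a b : H} (ha : a ∈ s) (hb : b ∈ s) :
    ⟪gradient f a, b - a⟫ ≤ f b - f a := by
  set g : ℝ → ℝ := fun t => f (a + t • (b - a)) with hg
  have hcurve : HasDerivAt (fun t : ℝ => a + t • (b - a)) (b - a) 0 := by
    simpa using ((hasDerivAt_id (0:ℝ)).smul_const (b - a)).const_add a
  have hF : HasFDerivAt f (InnerProductSpace.toDual ℝ H (gradient f a)) a := by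
    have := (hf a).hasGradientAt
    rw [HasGradientAt, HasGradientAtFilter] at this
    exact this
  have hd : HasDerivAt g (⟪gradient f a, b - a⟫) 0 := by
    have hF' : HasFDerivAt f (InnerProductSpace.toDual ℝ H (gradient f a)) (a + (0:ℝ) • (b - a)) := by
      simpa using hF
    have := hF'.comp_hasDerivAt 0 hcurve
    simpa [g, Function.comp_def, InnerProductSpace.toDual_apply_apply] using this
  have hslope : Filter.Tendsto (slope g 0) (nhdsWithin 0 (Set.Ioi 0))
      (nhds (⟪gradient f a, b - a⟫)) :=
    (hasDerivAt_iff_tendsto_slope.mp hd).mono_left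
      (nhdsWithin_mono _ fun t ht => ne_of_gt ht)
  refine le_of_tendsto hslope ?_
  filter_upwards [Ioc_mem_nhdsGT_of_mem (by norm_num : (0:ℝ) ∈ Set.Ico 0 1)] with t ht
  have ht0 : 0 < t := ht.1
  have hgt : g t ≤ (1 - t) * f a + t * f b := by
    have := hc.2 ha hb (by linarith [ht.2] : 0 ≤ 1 - t) ht0.le (by ring)
    have he : a + t • (b - a) = (1 - t) • a + t • b := by module
    simp only [smul_eq_mul] at this
    simp only [g, he]
    linarith
  have hg0 : g 0 = f a := by simp [g]
  have : slope g 0 t = (g t - g 0) / t := by simp [slope_def_field]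
  rw [this, div_le_iff₀ ht0, hg0]
  nlinarith

lemma proj_var_ineq {H : Type*} [NormedAddCommGroup H] [InnerProductSpace ℝ H]
    {S : Set H} (hS : Convex ℝ S) {v p : H} (hp : IsProjOn S v p) :
    ∀ w ∈ S, ⟪v - p, w - p⟫ ≤ 0 := by
  have : Nonempty S := ⟨⟨p, hp.1⟩⟩
  have key : ‖v - p‖ = ⨅ w : S, ‖v - w‖ := by
    refine le_antisymm (le_ciInf fun w => hp.2 w w.2) ?_
    exact ciInf_le ⟨0, by rintro _ ⟨w, rfl⟩; positivity⟩ (⟨p, hp.1⟩ : S)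
  exact (norm_eq_iInf_iff_real_inner_le_zero hS hp.1).mp key

lemma proj_sq_le {H : Type*} [NormedAddCommGroup H] [InnerProductSpace ℝ H]
    {S : Set H} (hS : Convex ℝ S) {v p : H} (hp : IsProjOn S v p) {w : H} (hw : w ∈ S) :
    ‖p - w‖ ^ 2 ≤ ‖v - w‖ ^ 2 := by
  have h1 := proj_var_ineq hS hp w hw
  have h2 : v - w = (v - p) + (p - w) := by abel
  have h3 : ‖v - w‖ ^ 2 = ‖v - p‖ ^ 2 + 2 * ⟪v - p, p - w⟫ + ‖p - w‖ ^ 2 := by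
    rw [h2]; exact norm_add_sq_real _ _
  have h4 : ⟪v - p, p - w⟫ = - ⟪v - p, w - p⟫ := by
    rw [← inner_neg_right]; congr 1; abel
  nlinarith [sq_nonneg ‖v - p‖]

lemma arith_aux (D L ℓ T' s : ℝ) (hℓ : 0 < ℓ) (hs : 0 < s) (hT : s^2 = T') :
    T'⁻¹ * ((2*D^2 + T'*((1/(ℓ*s))^2*L^2))/(2*(1/(ℓ*s)))) = (ℓ*D^2 + L^2/(2*ℓ))/s := by
  subst hT
  field_simp

lemma gradient_neg'' {H : Type*} [NormedAddCommGroup H] [InnerProductSpace ℝ H] [CompleteSpace H]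
    {f : H → ℝ} {b : H} (hf : DifferentiableAt ℝ f b) :
    gradient (fun v => -(f v)) b = -(gradient f b) := by
  have h := hf.hasGradientAt
  rw [HasGradientAt, HasGradientAtFilter] at h
  have h3 : HasGradientAt (fun v => -(f v)) (-(gradient f b)) b := by
    rw [HasGradientAt, HasGradientAtFilter, map_neg]
    exact h.neg
  exact h3.gradient

/-- Lemma B.4: `O(1/√T)` convergence of gradient descent ascent.
With stepsize `α = 1/(ℓ√T)`, the average of the GDA iterates `z_{t+1} = Π_{X×Y}(z_t − α G(z_t))`
satisfies `F(x̄_T, y) − F(x, ȳ_T) ≤ (ℓD² + L²/(2ℓ))/√T` for every `(x,y) ∈ X × Y`. -/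
theorem gda_convergence
    (X : Set E) (Y : Set E') (hXne : X.Nonempty) (hYne : Y.Nonempty)
    (hXcl : IsClosed X) (hYcl : IsClosed Y) (hXcv : Convex ℝ X) (hYcv : Convex ℝ Y)
    (D : ℝ) (hXD : ∀ s₁ ∈ X, ∀ s₂ ∈ X, ‖s₁ - s₂‖ ≤ D) (hYD : ∀ s₁ ∈ Y, ∀ s₂ ∈ Y, ‖s₁ - s₂‖ ≤ D)
    (F : E × E' → ℝ) (hFdiff : Differentiable ℝ F)
    (hcvx : ∀ y ∈ Y, ConvexOn ℝ X (fun x => F (x, y)))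
    (hccv : ∀ x ∈ X, ConcaveOn ℝ Y (fun y => F (x, y)))
    (hmono : ∀ z₁ ∈ prodSet X Y, ∀ z₂ ∈ prodSet X Y,
      0 ≤ ⟪saddleOp F z₁ - saddleOp F z₂, z₁ - z₂⟫)
    (L : ℝ) (hL : ∀ z ∈ prodSet X Y, ‖saddleOp F z‖ ≤ L)
    (T : ℕ) (hT : 1 ≤ T) (ℓ α : ℝ) (hℓ : 0 < ℓ) (hα : α = 1 / (ℓ * Real.sqrt T))
    (z : ℕ → WithLp 2 (E × E')) (hz0 : z 0 ∈ prodSet X Y)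
    (hupd : ∀ t < T, IsProjOn (prodSet X Y) (z t - α • saddleOp F (z t)) (z (t + 1))) :
    ∀ x ∈ X, ∀ y ∈ Y,
      F ((WithLp.equiv 2 (E × E') ((T : ℝ)⁻¹ • ∑ t ∈ Finset.range T, z t)).1, y) -
        F (x, (WithLp.equiv 2 (E × E') ((T : ℝ)⁻¹ • ∑ t ∈ Finset.range T, z t)).2) ≤
      (ℓ * D ^ 2 + L ^ 2 / (2 * ℓ)) / Real.sqrt T := by
  intro x hx y hy
  have memS : ∀ w : WithLp 2 (E × E'),
      w ∈ prodSet X Y ↔ w.fst ∈ X ∧ w.snd ∈ Y := fun w => Iff.rfl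
  -- convexity of the product set
  have hScv : Convex ℝ (prodSet X Y) := by
    intro z1 h1 z2 h2 a b ha hb hab
    rw [memS] at *
    constructor
    · simpa [WithLp.add_fst, WithLp.smul_fst] using hXcv h1.1 h2.1 ha hb hab
    · simpa [WithLp.add_snd, WithLp.smul_snd] using hYcv h1.2 h2.2 ha hb hab
  -- the saddle point candidate
  set zs : WithLp 2 (E × E') := (WithLp.equiv 2 (E × E')).symm (x, y) with hzs
  have hzsf : zs.fst = x := rfl
  have hzss : zs.snd = y := rfl
  have hzsS : zs ∈ prodSet X Y := (memS zs).mpr ⟨hx, hy⟩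
  -- basic positivity facts
  have hT0 : (0:ℝ) < T := by exact_mod_cast hT
  have hs0 : 0 < Real.sqrt T := Real.sqrt_pos.mpr hT0
  have hs2 : Real.sqrt T ^ 2 = T := Real.sq_sqrt hT0.le
  have hα0 : 0 < α := by rw [hα]; positivity
  have hD0 : 0 ≤ D := le_trans (norm_nonneg _) (hXD hXne.choose hXne.choose_spec hXne.choose hXne.choose_spec)
  have hL0 : 0 ≤ L := le_trans (norm_nonneg _) (hL _ hz0)
  -- all iterates stay in the set
  have hmem : ∀ t, t ≤ T → z t ∈ prodSet X Y := by
    intro t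
    induction t with
    | zero => intro _; exact hz0
    | succ n ih => intro h; exact (hupd n (by omega)).1
  -- components of the saddle operator
  have Gfst : ∀ w : WithLp 2 (E × E'),
      (saddleOp F w).fst = gradient (fun u => F (u, w.snd)) w.fst := fun w => rfl
  have Gsnd : ∀ w : WithLp 2 (E × E'),
      (saddleOp F w).snd = -gradient (fun v => F (w.fst, v)) w.snd := fun w => rfl
  -- step inequality
  have step : ∀ t < T, ‖z (t+1) - zs‖^2 ≤
      ‖z t - zs‖^2 - 2*α*⟪saddleOp F (z t), z t - zs⟫ + α^2 * L^2 := by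
    intro t ht
    have h := proj_sq_le hScv (hupd t ht) hzsS
    have he : (z t - α • saddleOp F (z t)) - zs = (z t - zs) - α • saddleOp F (z t) := by abel
    have hv : ‖(z t - zs) - α • saddleOp F (z t)‖^2 = ‖z t - zs‖^2
        - 2 * ⟪z t - zs, α • saddleOp F (z t)⟫ + ‖α • saddleOp F (z t)‖^2 :=
      norm_sub_sq_real _ _
    rw [he, hv] at h
    have hi : ⟪z t - zs, α • saddleOp F (z t)⟫ = α * ⟪saddleOp F (z t), z t - zs⟫ := by
      rw [real_inner_smul_right, real_inner_comm]
    have hn : ‖α • saddleOp F (z t)‖^2 ≤ α^2 * L^2 := by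
      rw [norm_smul, mul_pow]
      have hGL : ‖saddleOp F (z t)‖ ≤ L := hL _ (hmem t ht.le)
      have : ‖saddleOp F (z t)‖^2 ≤ L^2 := by nlinarith [norm_nonneg (saddleOp F (z t))]
      have hα2 : ‖α‖^2 = α^2 := by rw [Real.norm_eq_abs, sq_abs]
      rw [hα2]
      nlinarith [sq_nonneg α]
    rw [hi] at h
    linarith
  -- diameter bound
  have hdiam : ‖z 0 - zs‖^2 ≤ 2 * D^2 := by
    rw [WithLp.prod_norm_sq_eq_of_L2]
    have h0 := hmem 0 (by omega)
    rw [memS] at h0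
    have h1 : ‖(z 0 - zs).fst‖ ≤ D := by
      rw [WithLp.sub_fst, hzsf]; exact hXD _ h0.1 _ hx
    have h2 : ‖(z 0 - zs).snd‖ ≤ D := by
      rw [WithLp.sub_snd, hzss]; exact hYD _ h0.2 _ hy
    nlinarith [norm_nonneg ((z 0 - zs).fst), norm_nonneg ((z 0 - zs).snd)]
  -- summed inequality
  have sum_ineq : 2*α*(∑ t ∈ Finset.range T, ⟪saddleOp F (z t), z t - zs⟫) ≤
      2*D^2 + T*(α^2*L^2) := by
    have tel : ∑ t ∈ Finset.range T, (‖z t - zs‖^2 - ‖z (t+1) - zs‖^2)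
        = ‖z 0 - zs‖^2 - ‖z T - zs‖^2 := Finset.sum_range_sub' (fun t => ‖z t - zs‖^2) T
    have hsum : ∑ t ∈ Finset.range T, (2*α*⟪saddleOp F (z t), z t - zs⟫) ≤
        ∑ t ∈ Finset.range T, ((‖z t - zs‖^2 - ‖z (t+1) - zs‖^2) + α^2*L^2) := by
      refine Finset.sum_le_sum fun t ht => ?_
      have := step t (Finset.mem_range.mp ht)
      linarith
    rw [Finset.sum_add_distrib, tel, Finset.sum_const, Finset.card_range] at hsum
    rw [Finset.mul_sum]
    have hTz : (0:ℝ) ≤ ‖z T - zs‖^2 := sq_nonneg _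
    simp only [nsmul_eq_mul] at hsum
    linarith
  -- per-step gap bound
  have gap : ∀ t < T, F ((z t).fst, y) - F (x, (z t).snd) ≤ ⟪saddleOp F (z t), z t - zs⟫ := by
    intro t ht
    have htS := hmem t ht.le
    rw [memS] at htS
    set a := (z t).fst
    set b := (z t).snd
    have hdx : Differentiable ℝ (fun u : E => F (u, b)) :=
      hFdiff.comp (differentiable_id.prodMk (differentiable_const b))
    have hdy : Differentiable ℝ (fun v : E' => F (a, v)) :=
      hFdiff.comp ((differentiable_const a).prodMk differentiable_id)
    have h1 : ⟪gradient (fun u => F (u, b)) a, x - a⟫ ≤ F (x, b) - F (a, b) :=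
      grad_ineq' hdx (hcvx b htS.2) htS.1 hx
    have h2 : ⟪gradient (fun v => -(F (a, v))) b, y - b⟫ ≤ -(F (a, y)) - (-(F (a, b))) :=
      grad_ineq' (fun v => (hdy v).neg) (hccv a htS.1).neg htS.2 hy
    rw [gradient_neg'' (hdy b)] at h2
    have hinner : ⟪saddleOp F (z t), z t - zs⟫ =
        ⟪gradient (fun u => F (u, b)) a, a - x⟫ +
        ⟪-gradient (fun v => F (a, v)) b, b - y⟫ := by
      rw [WithLp.prod_inner_apply, WithLp.ofLp_fst, WithLp.ofLp_snd, WithLp.ofLp_fst, WithLp.ofLp_snd, Gfst, Gsnd, WithLp.sub_fst, WithLp.sub_snd, hzsf, hzss]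
    have e1 : ⟪gradient (fun u => F (u, b)) a, a - x⟫
        = -⟪gradient (fun u => F (u, b)) a, x - a⟫ := by
      rw [← inner_neg_right]; congr 1; abel
    have e2 : ⟪-gradient (fun v => F (a, v)) b, b - y⟫
        = ⟪-gradient (fun v => F (a, v)) b, -(y - b)⟫ := by congr 1; abel
    rw [inner_neg_left] at h2
    rw [hinner, e1, e2, inner_neg_neg]
    linarith
  -- Jensen
  set zb := (T : ℝ)⁻¹ • ∑ t ∈ Finset.range T, z t with hzb
  have hTne : (T:ℝ) ≠ 0 := ne_of_gt hT0
  have hwsum : ∑ _t ∈ Finset.range T, (T:ℝ)⁻¹ = 1 := by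
    rw [Finset.sum_const, Finset.card_range, nsmul_eq_mul, mul_inv_cancel₀ hTne]
  have sum_fst : (∑ t ∈ Finset.range T, z t).fst = ∑ t ∈ Finset.range T, (z t).fst := by
    exact map_sum (AddMonoidHom.mk' (fun w : WithLp 2 (E × E') => w.fst) fun _ _ => rfl)
      z (Finset.range T)
  have sum_snd : (∑ t ∈ Finset.range T, z t).snd = ∑ t ∈ Finset.range T, (z t).snd := by
    exact map_sum (AddMonoidHom.mk' (fun w : WithLp 2 (E × E') => w.snd) fun _ _ => rfl)
      z (Finset.range T)
  have hbf : (WithLp.equiv 2 (E × E') zb).1 = ∑ t ∈ Finset.range T, (T:ℝ)⁻¹ • (z t).fst := by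
    rw [WithLp.equiv_apply, WithLp.ofLp_fst, hzb, WithLp.smul_fst, sum_fst, Finset.smul_sum]
  have hbs : (WithLp.equiv 2 (E × E') zb).2 = ∑ t ∈ Finset.range T, (T:ℝ)⁻¹ • (z t).snd := by
    rw [WithLp.equiv_apply, WithLp.ofLp_snd, hzb, WithLp.smul_snd, sum_snd, Finset.smul_sum]
  have jensen1 : F ((WithLp.equiv 2 (E × E') zb).1, y) ≤
      ∑ t ∈ Finset.range T, (T:ℝ)⁻¹ * F ((z t).fst, y) := by
    rw [hbf]
    exact (hcvx y hy).map_sum_le (fun i _ => by positivity) hwsum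
      (fun i hi => ((memS _).mp (hmem i (Finset.mem_range.mp hi).le)).1)
  have jensen2 : ∑ t ∈ Finset.range T, (T:ℝ)⁻¹ * F (x, (z t).snd) ≤
      F (x, (WithLp.equiv 2 (E × E') zb).2) := by
    rw [hbs]
    exact (hccv x hx).le_map_sum (fun i _ => by positivity) hwsum
      (fun i hi => ((memS _).mp (hmem i (Finset.mem_range.mp hi).le)).2)
  have gsum : ∑ t ∈ Finset.range T, ((T:ℝ)⁻¹ * F ((z t).fst, y) - (T:ℝ)⁻¹ * F (x, (z t).snd)) ≤
      (T:ℝ)⁻¹ * ∑ t ∈ Finset.range T, ⟪saddleOp F (z t), z t - zs⟫ := by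
    rw [Finset.mul_sum]
    refine Finset.sum_le_sum fun t ht => ?_
    have h := gap t (Finset.mem_range.mp ht)
    have h2 : (T:ℝ)⁻¹ * (F ((z t).fst, y) - F (x, (z t).snd)) ≤
        (T:ℝ)⁻¹ * ⟪saddleOp F (z t), z t - zs⟫ :=
      mul_le_mul_of_nonneg_left h (by positivity)
    linarith
  have Ssub : ∑ t ∈ Finset.range T, ⟪saddleOp F (z t), z t - zs⟫ ≤
      (2*D^2 + T*(α^2*L^2))/(2*α) := by
    rw [le_div_iff₀ (by positivity)]
    linarith [sum_ineq]
  have hfin : (T:ℝ)⁻¹ * ((2*D^2 + T*(α^2*L^2))/(2*α)) = (ℓ * D^2 + L^2/(2*ℓ))/Real.sqrt T := by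
    rw [hα]
    exact arith_aux D L ℓ _ _ hℓ hs0 hs2
  have hmul : (T:ℝ)⁻¹ * ∑ t ∈ Finset.range T, ⟪saddleOp F (z t), z t - zs⟫ ≤
      (T:ℝ)⁻¹ * ((2*D^2 + T*(α^2*L^2))/(2*α)) :=
    mul_le_mul_of_nonneg_left Ssub (by positivity)
  have hsub : ∑ t ∈ Finset.range T, ((T:ℝ)⁻¹ * F ((z t).fst, y) - (T:ℝ)⁻¹ * F (x, (z t).snd))
      = (∑ t ∈ Finset.range T, (T:ℝ)⁻¹ * F ((z t).fst, y))
        - ∑ t ∈ Finset.range T, (T:ℝ)⁻¹ * F (x, (z t).snd) := Finset.sum_sub_distrib _ _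
  rw [hsub] at gsum
  calc F ((WithLp.equiv 2 (E × E') zb).1, y) - F (x, (WithLp.equiv 2 (E × E') zb).2)
      ≤ (T:ℝ)⁻¹ * ((2*D^2 + T*(α^2*L^2))/(2*α)) := by linarith
    _ = (ℓ * D^2 + L^2/(2*ℓ))/Real.sqrt T := hfin
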